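/- Let G be a second countable locally compact Hausdorff topological group with left Haar measure μ and let ω and ν be Borel 2-cocycles on G. On L²(G×G, μ×μ) define U by (Uξ)(s,t) = \overline{ν(t⁻¹s,s⁻¹)}·ξ(s,s⁻¹t). Then U is a well-defined unitary, and for every g ∈ G one has U ∘ L^{ων}_g ∘ U* = Λ^{ω,ν}_g, where L^{ων}_g is the unitary (L^{ων}_g ξ)(s,t) = ω(s⁻¹,g)·ν(s⁻¹,g)·ξ(g⁻¹s,t) and Λ^{ω,ν}_g is the unitary (Λ^{ω,ν}_g ξ)(s,t) = ω(s⁻¹,g)·ν(t⁻¹,g)·ξ(g⁻¹s,g⁻¹t). (In the notation of the paper: Wν̃*(λ^{ων}_g⊗1)ν̃W* = λ^ω_g ⊗ λ^ν_g.) -/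

import Mathlib

open MeasureTheory

namespace StmtAux10

open Filter

lemma unimod_conj_mul {z : ℂ} (hz : ‖z‖ = 1) : (starRingEnd ℂ) z * z = 1 := by
  rw [mul_comm, Complex.mul_conj]
  norm_cast
  rw [← Complex.sq_norm, hz]; norm_num

variable {α : Type*} [MeasurableSpace α] {μ : Measure α}

lemma meas_conj_symm {m : α → ℂ} (hm : Measurable m) (e : α ≃ᵐ α) :
    Measurable fun p => (starRingEnd ℂ) (m (e.symm p)) :=
  Complex.continuous_conj.measurable.comp (hm.comp e.symm.measurable)

lemma abs_conj_symm {m : α → ℂ} (hm1 : ∀ p, ‖m p‖ = 1) (e : α ≃ᵐ α) :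
    ∀ p, ‖(starRingEnd ℂ) (m (e.symm p))‖ = 1 :=
  fun p => by rw [Complex.norm_conj]; exact hm1 _

lemma comp_ae {e : α → α} (he : MeasurePreserving e μ μ) {f g : α → ℂ} (h : f =ᵐ[μ] g) :
    (fun p => f (e p)) =ᵐ[μ] fun p => g (e p) :=
  he.quasiMeasurePreserving.ae_eq_comp h

lemma memLp_aux {e : α → α} (he : MeasurePreserving e μ μ) {m : α → ℂ}
    (hm : Measurable m) (hm1 : ∀ p, ‖m p‖ = 1) (ξ : Lp ℂ 2 μ) :
    MemLp (fun p => m p * ξ (e p)) 2 μ := by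
  have h1 : MemLp (fun p => ξ (e p)) 2 μ := (Lp.memLp ξ).comp_measurePreserving he
  refine ⟨hm.aestronglyMeasurable.mul h1.1, ?_⟩
  have heq : eLpNorm (fun p => m p * ξ (e p)) 2 μ = eLpNorm (fun p => ξ (e p)) 2 μ :=
    eLpNorm_congr_norm_ae (Eventually.of_forall fun p => by
      simp [map_mul, hm1 p])
  rw [heq]; exact h1.2

noncomputable def half {e : α → α} (he : MeasurePreserving e μ μ) {m : α → ℂ}
    (hm : Measurable m) (hm1 : ∀ p, ‖m p‖ = 1) (ξ : Lp ℂ 2 μ) : Lp ℂ 2 μ :=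
  (memLp_aux he hm hm1 ξ).toLp _

lemma half_coe {e : α → α} (he : MeasurePreserving e μ μ) {m : α → ℂ}
    (hm : Measurable m) (hm1 : ∀ p, ‖m p‖ = 1) (ξ : Lp ℂ 2 μ) :
    (half he hm hm1 ξ : α → ℂ) =ᵐ[μ] fun p => m p * ξ (e p) :=
  MemLp.coeFn_toLp _

noncomputable def mulComp (e : α ≃ᵐ α) (he : MeasurePreserving e μ μ) {m : α → ℂ}
    (hm : Measurable m) (hm1 : ∀ p, ‖m p‖ = 1) :
    Lp ℂ 2 μ ≃ₗᵢ[ℂ] Lp ℂ 2 μ where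
  toFun := half he hm hm1
  invFun := half (he.symm e) (meas_conj_symm hm e) (abs_conj_symm hm1 e)
  map_add' ξ η := by
    apply Lp.ext
    filter_upwards [half_coe he hm hm1 (ξ + η), Lp.coeFn_add (half he hm hm1 ξ) (half he hm hm1 η),
      half_coe he hm hm1 ξ, half_coe he hm hm1 η, comp_ae he (Lp.coeFn_add ξ η)]
      with p h1 h2 h3 h4 h5
    rw [h1, h5, h2, Pi.add_apply, Pi.add_apply, h3, h4, mul_add]
  map_smul' c ξ := by
    apply Lp.ext
    filter_upwards [half_coe he hm hm1 (c • ξ), Lp.coeFn_smul c (half he hm hm1 ξ),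
      half_coe he hm hm1 ξ, comp_ae he (Lp.coeFn_smul c ξ)] with p h1 h2 h3 h4
    rw [RingHom.id_apply, h1, h4, h2, Pi.smul_apply, Pi.smul_apply, h3, smul_eq_mul,
      smul_eq_mul]
    ring
  left_inv ξ := by
    apply Lp.ext
    filter_upwards [half_coe (he.symm e) (meas_conj_symm hm e) (abs_conj_symm hm1 e)
        (half he hm hm1 ξ),
      comp_ae (he.symm e) (half_coe he hm hm1 ξ)] with p h1 h2
    rw [h1, h2, MeasurableEquiv.apply_symm_apply, ← mul_assoc,
      unimod_conj_mul (hm1 _), one_mul]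
  right_inv ξ := by
    apply Lp.ext
    filter_upwards [half_coe he hm hm1
        (half (he.symm e) (meas_conj_symm hm e) (abs_conj_symm hm1 e) ξ),
      comp_ae he (half_coe (he.symm e) (meas_conj_symm hm e) (abs_conj_symm hm1 e) ξ)]
      with p h1 h2
    rw [h1, h2, MeasurableEquiv.symm_apply_apply, ← mul_assoc, mul_comm (m p),
      unimod_conj_mul (hm1 _), one_mul]
  norm_map' ξ := by
    show ‖(memLp_aux he hm hm1 ξ).toLp _‖ = ‖ξ‖
    rw [Lp.norm_toLp, Lp.norm_def]
    congr 1
    have h1 : eLpNorm (fun p => m p * ξ (e p)) 2 μ = eLpNorm (fun p => ξ (e p)) 2 μ :=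
      eLpNorm_congr_norm_ae (Eventually.of_forall fun p => by
        simp [map_mul, hm1 p])
    rw [h1]
    exact eLpNorm_comp_measurePreserving (Lp.aestronglyMeasurable ξ) he

lemma mulComp_coe (e : α ≃ᵐ α) (he : MeasurePreserving e μ μ) {m : α → ℂ}
    (hm : Measurable m) (hm1 : ∀ p, ‖m p‖ = 1) (ξ : Lp ℂ 2 μ) :
    (mulComp e he hm hm1 ξ : α → ℂ) =ᵐ[μ] fun p => m p * ξ (e p) :=
  half_coe he hm hm1 ξ

lemma mulComp_symm_coe (e : α ≃ᵐ α) (he : MeasurePreserving e μ μ) {m : α → ℂ}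
    (hm : Measurable m) (hm1 : ∀ p, ‖m p‖ = 1) (ξ : Lp ℂ 2 μ) :
    ((mulComp e he hm hm1).symm ξ : α → ℂ) =ᵐ[μ]
      fun p => (starRingEnd ℂ) (m (e.symm p)) * ξ (e.symm p) :=
  half_coe (he.symm e) (meas_conj_symm hm e) (abs_conj_symm hm1 e) ξ

end StmtAux10

open StmtAux10 Filter

/-- Let `ω` and `ν` be Borel `𝕋`-valued 2-cocycles on `G`. On `L²(G×G)` define `U` by
`(Uξ)(s,t) = conj(ν(t⁻¹s,s⁻¹))·ξ(s,s⁻¹t)`. Then `U` is a well-defined unitary, and for every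
`g` one has `U ∘ L^{ων}_g ∘ U* = Λ^{ω,ν}_g`, where
`(L^{ων}_g ξ)(s,t) = ω(s⁻¹,g)·ν(s⁻¹,g)·ξ(g⁻¹s,t)` and
`(Λ^{ω,ν}_g ξ)(s,t) = ω(s⁻¹,g)·ν(t⁻¹,g)·ξ(g⁻¹s,g⁻¹t)`.
(In the paper's notation: `Wν̃*(λ^{ων}_g⊗1)ν̃W* = λ^ω_g ⊗ λ^ν_g`.) -/
theorem stmt_10 {G : Type*} [TopologicalSpace G] [Group G] [IsTopologicalGroup G]
    [SecondCountableTopology G] [LocallyCompactSpace G] [T2Space G]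
    [MeasurableSpace G] [BorelSpace G]
    (μ : Measure G) [μ.IsHaarMeasure]
    (ω ν : G → G → ℂ)
    (hmeasω : Measurable fun p : G × G => ω p.1 p.2)
    (habsω : ∀ g h : G, ‖ω g h‖ = 1)
    (hcocω : ∀ g h k : G, ω g h * ω (g * h) k = ω g (h * k) * ω h k)
    (hmeasν : Measurable fun p : G × G => ν p.1 p.2)
    (habsν : ∀ g h : G, ‖ν g h‖ = 1)
    (hcocν : ∀ g h k : G, ν g h * ν (g * h) k = ν g (h * k) * ν h k) :
    ∃ U : Lp ℂ 2 (μ.prod μ) ≃ₗᵢ[ℂ] Lp ℂ 2 (μ.prod μ),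
      (∀ ξ : Lp ℂ 2 (μ.prod μ), (U ξ : G × G → ℂ) =ᵐ[μ.prod μ]
        fun p => starRingEnd ℂ (ν (p.2⁻¹ * p.1) p.1⁻¹) * ξ (p.1, p.1⁻¹ * p.2)) ∧
      ∀ g : G,
        (∃ L : Lp ℂ 2 (μ.prod μ) ≃ₗᵢ[ℂ] Lp ℂ 2 (μ.prod μ),
          ∀ ξ : Lp ℂ 2 (μ.prod μ), (L ξ : G × G → ℂ) =ᵐ[μ.prod μ]
            fun p => ω p.1⁻¹ g * ν p.1⁻¹ g * ξ (g⁻¹ * p.1, p.2)) ∧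
        (∃ Lam : Lp ℂ 2 (μ.prod μ) ≃ₗᵢ[ℂ] Lp ℂ 2 (μ.prod μ),
          ∀ ξ : Lp ℂ 2 (μ.prod μ), (Lam ξ : G × G → ℂ) =ᵐ[μ.prod μ]
            fun p => ω p.1⁻¹ g * ν p.2⁻¹ g * ξ (g⁻¹ * p.1, g⁻¹ * p.2)) ∧
        (∀ L Lam : Lp ℂ 2 (μ.prod μ) ≃ₗᵢ[ℂ] Lp ℂ 2 (μ.prod μ),
          (∀ ξ : Lp ℂ 2 (μ.prod μ), (L ξ : G × G → ℂ) =ᵐ[μ.prod μ]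
            fun p => ω p.1⁻¹ g * ν p.1⁻¹ g * ξ (g⁻¹ * p.1, p.2)) →
          (∀ ξ : Lp ℂ 2 (μ.prod μ), (Lam ξ : G × G → ℂ) =ᵐ[μ.prod μ]
            fun p => ω p.1⁻¹ g * ν p.2⁻¹ g * ξ (g⁻¹ * p.1, g⁻¹ * p.2)) →
          ∀ ξ : Lp ℂ 2 (μ.prod μ), U (L (U.symm ξ)) = Lam ξ) := by
  -- the shear equivalence (s,t) ↦ (s, s⁻¹t)
  let eU : (G × G) ≃ᵐ (G × G) :=
    ⟨⟨fun p => (p.1, p.1⁻¹ * p.2), fun p => (p.1, p.1 * p.2),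
      fun p => by simp, fun p => by simp⟩,
      measurable_fst.prodMk (measurable_fst.inv.mul measurable_snd),
      measurable_fst.prodMk (measurable_fst.mul measurable_snd)⟩
  have hEU : MeasurePreserving eU (μ.prod μ) (μ.prod μ) :=
    measurePreserving_prod_inv_mul μ μ
  -- multiplier for U
  have hmU : Measurable fun p : G × G => (starRingEnd ℂ) (ν (p.2⁻¹ * p.1) p.1⁻¹) :=
    Complex.continuous_conj.measurable.comp
      (hmeasν.comp ((measurable_snd.inv.mul measurable_fst).prodMk measurable_fst.inv))
  have hmU1 : ∀ p : G × G, ‖(starRingEnd ℂ) (ν (p.2⁻¹ * p.1) p.1⁻¹)‖ = 1 :=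
    fun p => by rw [Complex.norm_conj]; exact habsν _ _
  refine ⟨mulComp eU hEU hmU hmU1, fun ξ => mulComp_coe eU hEU hmU hmU1 ξ, fun g => ?_⟩
  -- translation equivalences
  let eL : (G × G) ≃ᵐ (G × G) :=
    ⟨⟨fun p => (g⁻¹ * p.1, p.2), fun p => (g * p.1, p.2),
      fun p => by simp, fun p => by simp⟩,
      (measurable_const.mul measurable_fst).prodMk measurable_snd,
      (measurable_const.mul measurable_fst).prodMk measurable_snd⟩
  have hEL : MeasurePreserving eL (μ.prod μ) (μ.prod μ) :=
    (measurePreserving_mul_left μ g⁻¹).prod (MeasurePreserving.id μ)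
  let eΛ : (G × G) ≃ᵐ (G × G) :=
    ⟨⟨fun p => (g⁻¹ * p.1, g⁻¹ * p.2), fun p => (g * p.1, g * p.2),
      fun p => by simp, fun p => by simp⟩,
      (measurable_const.mul measurable_fst).prodMk (measurable_const.mul measurable_snd),
      (measurable_const.mul measurable_fst).prodMk (measurable_const.mul measurable_snd)⟩
  have hEΛ : MeasurePreserving eΛ (μ.prod μ) (μ.prod μ) :=
    (measurePreserving_mul_left μ g⁻¹).prod (measurePreserving_mul_left μ g⁻¹)
  have hmL : Measurable fun p : G × G => ω p.1⁻¹ g * ν p.1⁻¹ g := by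
    have h1 : Measurable fun p : G × G => (p.1⁻¹, g) := measurable_fst.inv.prodMk measurable_const
    exact (hmeasω.comp h1).mul (hmeasν.comp h1)
  have hmL1 : ∀ p : G × G, ‖ω p.1⁻¹ g * ν p.1⁻¹ g‖ = 1 := fun p => by
    rw [norm_mul, habsω, habsν, one_mul]
  have hmΛ : Measurable fun p : G × G => ω p.1⁻¹ g * ν p.2⁻¹ g := by
    have h1 : Measurable fun p : G × G => (p.1⁻¹, g) := measurable_fst.inv.prodMk measurable_const
    have h2 : Measurable fun p : G × G => (p.2⁻¹, g) := measurable_snd.inv.prodMk measurable_const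
    exact (hmeasω.comp h1).mul (hmeasν.comp h2)
  have hmΛ1 : ∀ p : G × G, ‖ω p.1⁻¹ g * ν p.2⁻¹ g‖ = 1 := fun p => by
    rw [norm_mul, habsω, habsν, one_mul]
  refine ⟨⟨mulComp eL hEL hmL hmL1, fun ξ => mulComp_coe eL hEL hmL hmL1 ξ⟩,
    ⟨mulComp eΛ hEΛ hmΛ hmΛ1, fun ξ => mulComp_coe eΛ hEΛ hmΛ hmΛ1 ξ⟩,
    fun L Lam hL hLam ξ => ?_⟩
  apply Lp.ext
  set U := mulComp eU hEU hmU hmU1 with hUdef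
  have hELU : MeasurePreserving (fun p : G × G => eL (eU p)) (μ.prod μ) (μ.prod μ) :=
    hEL.comp hEU
  filter_upwards [mulComp_coe eU hEU hmU hmU1 (L (U.symm ξ)),
    comp_ae hEU (hL (U.symm ξ)),
    comp_ae hELU (mulComp_symm_coe eU hEU hmU hmU1 ξ),
    hLam ξ] with p h1 h2 h3 h4
  obtain ⟨s, t⟩ := p
  have H1 : (U (L (U.symm ξ)) : G × G → ℂ) (s, t) =
      (starRingEnd ℂ) (ν (t⁻¹ * s) s⁻¹) * (L (U.symm ξ) : G × G → ℂ) (s, s⁻¹ * t) := h1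
  have H2 : (L (U.symm ξ) : G × G → ℂ) (s, s⁻¹ * t) =
      ω s⁻¹ g * ν s⁻¹ g * (U.symm ξ : G × G → ℂ) (g⁻¹ * s, s⁻¹ * t) := h2
  have H3 : (U.symm ξ : G × G → ℂ) (g⁻¹ * s, s⁻¹ * t) =
      (starRingEnd ℂ) ((starRingEnd ℂ)
        (ν ((g⁻¹ * s * (s⁻¹ * t))⁻¹ * (g⁻¹ * s)) (g⁻¹ * s)⁻¹)) *
        ξ (g⁻¹ * s, g⁻¹ * s * (s⁻¹ * t)) := h3
  have H4 : (Lam ξ : G × G → ℂ) (s, t) = ω s⁻¹ g * ν t⁻¹ g * ξ (g⁻¹ * s, g⁻¹ * t) := h4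
  rw [H1, H2, H3, H4, Complex.conj_conj]
  have e1 : g⁻¹ * s * (s⁻¹ * t) = g⁻¹ * t := by group
  rw [e1]
  have e2 : (g⁻¹ * t)⁻¹ * (g⁻¹ * s) = t⁻¹ * s := by group
  have e3 : (g⁻¹ * s)⁻¹ = s⁻¹ * g := by group
  rw [e2, e3]
  have hcoc := hcocν (t⁻¹ * s) s⁻¹ g
  rw [show t⁻¹ * s * s⁻¹ = t⁻¹ by group] at hcoc
  have h5 : (starRingEnd ℂ) (ν (t⁻¹ * s) s⁻¹) * ν (t⁻¹ * s) s⁻¹ = 1 :=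
    unimod_conj_mul (habsν _ _)
  linear_combination (-((starRingEnd ℂ) (ν (t⁻¹ * s) s⁻¹)) * ω s⁻¹ g * ξ (g⁻¹ * s, g⁻¹ * t)) * hcoc
    + (ω s⁻¹ g * ν t⁻¹ g * ξ (g⁻¹ * s, g⁻¹ * t)) * h5
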